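/- For every k ∈ ℕ one has the identity P_{(0,k+1)}(s,t) = P_{(1,k)}(s,t) − s·P_{(2,k−1)}(s,t) in ℤ[s,t], and for every j with 0 ≤ j ≤ k−1 the identity t·P_{(j,k+1−j)}(s,t) = P_{(j+1,k−j)}(s,t) − P_{(j+2,k−j−1)}(s,t) + s·P_{(j+3,k−j−2)}(s,t), where by convention P_μ = 0 whenever μ ∉ ℕ₀². -/

import Mathlib

open MvPolynomial

noncomputable section

abbrev Rxy : Type := MvPolynomial (Fin 2) ℤ

/-- The fraction field of ℤ[x,y]. -/
abbrev Kxy : Type := FractionRing Rxy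

/-- The image of `x` in the fraction field. -/
noncomputable def xx : Kxy := algebraMap Rxy Kxy (X 0)

/-- The image of `y` in the fraction field. -/
noncomputable def yy : Kxy := algebraMap Rxy Kxy (X 1)

/-- `s = x / y²`. -/
noncomputable def sv : Kxy := xx / yy ^ 2

/-- `t = y / x²`. -/
noncomputable def tv : Kxy := yy / xx ^ 2

/-- Evaluation of a two-variable integer polynomial at `(s, t)` in the fraction field. -/
noncomputable def evST (p : Rxy) : Kxy := aeval ![sv, tv] p

set_option maxHeartbeats 1000000
set_option synthInstance.maxHeartbeats 1000000

lemma xx_ne : xx ≠ 0 := by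
  simp only [xx, ne_eq, map_eq_zero_iff _ (IsFractionRing.injective Rxy Kxy)]
  exact X_ne_zero 0

lemma yy_ne : yy ≠ 0 := by
  simp only [yy, ne_eq, map_eq_zero_iff _ (IsFractionRing.injective Rxy Kxy)]
  exact X_ne_zero 1

lemma fprod {M : Type*} [CommMonoid M] (f : Fin 2 → M) (e : Fin 2 →₀ ℕ) :
    (e.prod fun i k => f i ^ k) = f 0 ^ e 0 * f 1 ^ e 1 := by
  rw [Finsupp.prod_fintype _ _ (fun i => pow_zero _), Fin.prod_univ_two]

def Tm (n : ℕ) (d : Fin 2 →₀ ℕ) : Fin 2 →₀ ℕ :=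
  Finsupp.equivFunOnFinite.symm ![2*n + d 0 - 2 * d 1, 2*n + d 1 - 2 * d 0]

@[simp] lemma Tm_apply0 (n : ℕ) (d : Fin 2 →₀ ℕ) : Tm n d 0 = 2*n + d 0 - 2 * d 1 := rfl
@[simp] lemma Tm_apply1 (n : ℕ) (d : Fin 2 →₀ ℕ) : Tm n d 1 = 2*n + d 1 - 2 * d 0 := rfl

lemma Tm_injOn (n : ℕ) : Set.InjOn (Tm n) {d | d 0 ≤ n ∧ d 1 ≤ n} := by
  intro d hd e he h
  obtain ⟨hd0, hd1⟩ := hd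
  obtain ⟨he0, he1⟩ := he
  have h0 : Tm n d 0 = Tm n e 0 := by rw [h]
  have h1 : Tm n d 1 = Tm n e 1 := by rw [h]
  simp only [Tm_apply0, Tm_apply1] at h0 h1
  have e0 : d 0 = e 0 := by omega
  have e1 : d 1 = e 1 := by omega
  ext i
  fin_cases i
  exacts [e0, e1]

lemma term_eq (n : ℕ) (d : Fin 2 →₀ ℕ) (c : ℤ) (h0 : d 0 ≤ n) (h1 : d 1 ≤ n) :
    xx ^ (2*n) * yy ^ (2*n) * evST (monomial d c) =
      algebraMap Rxy Kxy (monomial (Tm n d) c) := by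
  have hL : evST (monomial d c) = (c : Kxy) * (sv ^ d 0 * tv ^ d 1) := by
    rw [evST, aeval_monomial, show (algebraMap ℤ Kxy) c = (c : Kxy) by simp,
      fprod ![sv, tv] d]
    simp
  have hR : algebraMap Rxy Kxy (monomial (Tm n d) c)
      = (c : Kxy) * (xx ^ (Tm n d 0) * yy ^ (Tm n d 1)) := by
    rw [monomial_eq, fprod (fun i => (X i : Rxy)) (Tm n d), map_mul, map_mul, map_pow, map_pow]
    rw [show (algebraMap Rxy Kxy) (C c) = (c : Kxy) by simp, xx, yy]
  rw [hL, hR, Tm_apply0, Tm_apply1, sv, tv, div_pow, div_pow, div_mul_div_comm,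
    mul_div_assoc', mul_div_assoc',
    div_eq_iff (mul_ne_zero (pow_ne_zero _ (pow_ne_zero _ yy_ne))
      (pow_ne_zero _ (pow_ne_zero _ xx_ne)))]
  have ha : xx ^ (2*n + d 0 - 2*d 1) * xx ^ (2*d 1) = xx ^ (2*n) * xx ^ (d 0) := by
    rw [← pow_add, ← pow_add]; congr 1; omega
  have hb : yy ^ (2*n + d 1 - 2*d 0) * yy ^ (2*d 0) = yy ^ (2*n) * yy ^ (d 1) := by
    rw [← pow_add, ← pow_add]; congr 1; omega
  linear_combination (-(c : Kxy) * (yy ^ (2*n) * yy ^ (d 1))) * ha -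
    (c : Kxy) * (xx ^ (2*n + d 0 - 2*d 1) * xx ^ (2*d 1)) * hb

lemma evST_zero_iff {p : Rxy} (hp : evST p = 0) : p = 0 := by
  classical
  set n := p.totalDegree with hn
  have hbound : ∀ d ∈ p.support, d 0 ≤ n ∧ d 1 ≤ n := by
    intro d hd
    have h := le_totalDegree hd
    have hsum : (d.sum fun _ e => e) = d 0 + d 1 := by
      rw [Finsupp.sum_fintype _ _ (fun i => rfl), Fin.sum_univ_two]
    rw [hsum] at h
    omega
  set q : Rxy := ∑ d ∈ p.support, monomial (Tm n d) (coeff d p) with hq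
  have key : xx ^ (2*n) * yy ^ (2*n) * evST p = algebraMap Rxy Kxy q := by
    calc xx ^ (2*n) * yy ^ (2*n) * evST p
        = ∑ d ∈ p.support, xx ^ (2*n) * yy ^ (2*n) * evST (monomial d (coeff d p)) := by
          rw [show evST p = ∑ d ∈ p.support, evST (monomial d (coeff d p)) by
                rw [evST]
                conv_lhs => rw [p.as_sum]
                rw [map_sum]
                rfl,
            Finset.mul_sum]
      _ = ∑ d ∈ p.support, algebraMap Rxy Kxy (monomial (Tm n d) (coeff d p)) :=
          Finset.sum_congr rfl fun d hd => term_eq n d _ (hbound d hd).1 (hbound d hd).2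
      _ = algebraMap Rxy Kxy q := by rw [hq, map_sum]
  rw [hp, mul_zero] at key
  have hq0 : q = 0 := (map_eq_zero_iff _ (IsFractionRing.injective Rxy Kxy)).1 key.symm
  ext d
  rw [coeff_zero]
  by_cases hd : d ∈ p.support
  · have hc : coeff (Tm n d) q = coeff d p := by
      rw [hq, MvPolynomial.coeff_sum]
      rw [Finset.sum_eq_single_of_mem d hd]
      · rw [coeff_monomial, if_pos rfl]
      · intro d' hd' hne
        rw [coeff_monomial, if_neg]
        intro habs
        exact hne (Tm_injOn n (hbound d' hd') (hbound d hd) habs)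
    rw [hq0, coeff_zero] at hc
    exact hc.symm
  · simpa using hd

lemma evST_injective : Function.Injective evST := by
  intro p q h
  have h0 : evST (p - q) = 0 := by
    simp only [evST, map_sub] at h ⊢
    rw [h, sub_self]
  exact sub_eq_zero.mp (evST_zero_iff h0)


/-- Defining properties of the SU(3) character polynomials `Q a b`
(with the convention `Q a b = 0` whenever `(a, b) ∉ ℕ₀²`). -/
def IsQSU3 (Q : ℤ → ℤ → Rxy) : Prop :=
  (∀ a b : ℤ, (a < 0 ∨ b < 0) → Q a b = 0) ∧
  Q 0 0 = 1 ∧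
  Q 1 0 = X 0 ∧
  (∀ a b : ℤ, 0 ≤ a → 0 ≤ b →
    X 0 * Q a b = Q (a + 1) b + Q a (b - 1) + Q (a - 1) (b + 1)) ∧
  (∀ a b : ℤ, rename (Equiv.swap (0 : Fin 2) 1) (Q a b) = Q b a)

/-- Defining property of the polynomials `P a b` (in the variables `s, t`), namely
`P_λ(x/y², y/x²) = x^{-λ₁} y^{-λ₂} Q_λ(x,y)` in the fraction field of ℤ[x,y]
(with the convention `P a b = 0` whenever `(a, b) ∉ ℕ₀²`). -/
def IsPSU3 (Q P : ℤ → ℤ → Rxy) : Prop :=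
  (∀ a b : ℤ, (a < 0 ∨ b < 0) → P a b = 0) ∧
  (∀ a b : ℤ, 0 ≤ a → 0 ≤ b →
    evST (P a b) = algebraMap Rxy Kxy (Q a b) / (xx ^ a * yy ^ b))

theorem stmt_6 (Q P : ℤ → ℤ → Rxy) (hQ : IsQSU3 Q) (hP : IsPSU3 Q P) (k : ℕ) (hk : 1 ≤ k) :
    (P 0 ((k : ℤ) + 1) = P 1 (k : ℤ) - X 0 * P 2 ((k : ℤ) - 1)) ∧
    ∀ j : ℕ, (j : ℤ) ≤ (k : ℤ) - 1 →
      X 1 * P (j : ℤ) ((k : ℤ) + 1 - j) =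
        P ((j : ℤ) + 1) ((k : ℤ) - j) - P ((j : ℤ) + 2) ((k : ℤ) - j - 1) +
          X 0 * P ((j : ℤ) + 3) ((k : ℤ) - j - 2) := by
  obtain ⟨hQneg, hQ00, hQ10, hxrec, hswap⟩ := hQ
  obtain ⟨hPneg, hPev⟩ := hP
  have hyrec : ∀ a b : ℤ, 0 ≤ a → 0 ≤ b →
      X 1 * Q a b = Q a (b + 1) + Q (a - 1) b + Q (a + 1) (b - 1) := by
    intro a b ha hb
    have h := congrArg (rename (Equiv.swap (0 : Fin 2) 1)) (hxrec b a hb ha)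
    simpa [map_mul, map_add, rename_X, Equiv.swap_apply_left, hswap] using h
  have eS : ∀ p q : Rxy, evST (p - q) = evST p - evST q := fun p q => by simp [evST]
  have eA : ∀ p q : Rxy, evST (p + q) = evST p + evST q := fun p q => by simp [evST]
  have eM0 : ∀ p : Rxy, evST (X 0 * p) = sv * evST p := fun p => by simp [evST]
  have eM1 : ∀ p : Rxy, evST (X 1 * p) = tv * evST p := fun p => by simp [evST]
  obtain ⟨m, rfl⟩ : ∃ m, k = m + 1 := ⟨k - 1, by omega⟩
  constructor
  · have c1 : ((m + 1 : ℕ) : ℤ) + 1 = (m : ℤ) + 2 := by push_cast; ring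
    have c2 : ((m + 1 : ℕ) : ℤ) = (m : ℤ) + 1 := by push_cast; ring
    have c3 : ((m + 1 : ℕ) : ℤ) - 1 = (m : ℤ) := by push_cast; ring
    rw [c3, c1, c2]
    apply evST_injective
    rw [eS, eM0, hPev 0 ((m : ℤ) + 2) le_rfl (by positivity),
      hPev 1 ((m : ℤ) + 1) zero_le_one (by positivity),
      hPev 2 (m : ℤ) (by norm_num) (Int.natCast_nonneg m)]
    rw [show ((m : ℤ) + 2) = ((m + 2 : ℕ) : ℤ) by push_cast; ring,
      show ((m : ℤ) + 1) = ((m + 1 : ℕ) : ℤ) by push_cast; ring,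
      show ((m : ℤ)) = ((m : ℕ) : ℤ) from rfl,
      zpow_natCast, zpow_natCast, zpow_natCast, zpow_zero, zpow_one,
      show ((2 : ℤ)) = ((2 : ℕ) : ℤ) by norm_num, zpow_natCast]
    have r1 : xx * algebraMap Rxy Kxy (Q 0 ((m : ℤ) + 2)) =
        algebraMap Rxy Kxy (Q 1 ((m : ℤ) + 2)) + algebraMap Rxy Kxy (Q 0 ((m : ℤ) + 1)) := by
      have h := hxrec 0 ((m : ℤ) + 2) le_rfl (by positivity)
      rw [show (0 : ℤ) + 1 = 1 by norm_num, show (m : ℤ) + 2 - 1 = (m : ℤ) + 1 by ring,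
        show (0 : ℤ) - 1 = -1 by norm_num, hQneg (-1) _ (Or.inl (by norm_num)), add_zero] at h
      have h2 := congrArg (algebraMap Rxy Kxy) h
      rw [map_mul, map_add] at h2
      exact h2
    have r2 : yy * algebraMap Rxy Kxy (Q 1 ((m : ℤ) + 1)) =
        algebraMap Rxy Kxy (Q 1 ((m : ℤ) + 2)) + algebraMap Rxy Kxy (Q 0 ((m : ℤ) + 1)) +
          algebraMap Rxy Kxy (Q 2 (m : ℤ)) := by
      have h := hyrec 1 ((m : ℤ) + 1) zero_le_one (by positivity)
      rw [show (m : ℤ) + 1 + 1 = (m : ℤ) + 2 by ring, show (1 : ℤ) - 1 = 0 by norm_num,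
        show (1 : ℤ) + 1 = 2 by norm_num, show (m : ℤ) + 1 - 1 = (m : ℤ) by ring] at h
      have h2 := congrArg (algebraMap Rxy Kxy) h
      rw [map_mul, map_add, map_add] at h2
      exact h2
    rw [sv]
    field_simp [xx_ne, yy_ne]
    push_cast
    linear_combination (yy ^ (m + 1) * yy ^ (m + 2)) * r1 -
      (yy ^ (m + 1) * yy ^ (m + 2)) * r2
  · intro j hj
    have hjm : j ≤ m := by omega
    obtain ⟨r, rfl⟩ : ∃ r, m = j + r := ⟨m - j, by omega⟩
    rcases Nat.eq_zero_or_pos r with hr | hr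
    · subst hr
      have c1 : ((j + 0 + 1 : ℕ) : ℤ) + 1 - (j : ℤ) = 2 := by push_cast; ring
      have c2 : ((j + 0 + 1 : ℕ) : ℤ) - (j : ℤ) = 1 := by push_cast; ring
      have c3 : ((j + 0 + 1 : ℕ) : ℤ) - (j : ℤ) - 1 = 0 := by push_cast; ring
      have c4 : ((j + 0 + 1 : ℕ) : ℤ) - (j : ℤ) - 2 = -1 := by push_cast; ring
      rw [c4, c3, c1, c2]
      rw [hPneg ((j : ℤ) + 3) (-1) (Or.inr (by norm_num)), mul_zero, add_zero]
      apply evST_injective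
      rw [eS, eM1]
      rw [hPev (j : ℤ) 2 (Int.natCast_nonneg j) (by norm_num),
        hPev ((j : ℤ) + 1) 1 (by positivity) zero_le_one,
        hPev ((j : ℤ) + 2) 0 (by positivity) le_rfl]
      have zx1 : xx ^ ((j : ℤ) + 1) = xx ^ (j + 1) := by
        rw [show ((j : ℤ) + 1) = ((j + 1 : ℕ) : ℤ) by push_cast; ring, zpow_natCast]
      have zx2 : xx ^ ((j : ℤ) + 2) = xx ^ (j + 2) := by
        rw [show ((j : ℤ) + 2) = ((j + 2 : ℕ) : ℤ) by push_cast; ring, zpow_natCast]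
      rw [zx1, zx2, zpow_natCast, zpow_one, zpow_zero]
      have zy2 : yy ^ (2 : ℤ) = yy ^ (2 : ℕ) := by
        rw [show (2 : ℤ) = ((2 : ℕ) : ℤ) by norm_num, zpow_natCast]
      rw [zy2]
      have r1 : xx * algebraMap Rxy Kxy (Q ((j : ℤ) + 1) 1) =
          algebraMap Rxy Kxy (Q ((j : ℤ) + 2) 1) + algebraMap Rxy Kxy (Q ((j : ℤ) + 1) 0) +
            algebraMap Rxy Kxy (Q (j : ℤ) 2) := by
        have h := hxrec ((j : ℤ) + 1) 1 (by positivity) zero_le_one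
        rw [show (j : ℤ) + 1 + 1 = (j : ℤ) + 2 by ring, show (1 : ℤ) - 1 = 0 by norm_num,
          show (j : ℤ) + 1 - 1 = (j : ℤ) by ring, show (1 : ℤ) + 1 = 2 by norm_num] at h
        have h2 := congrArg (algebraMap Rxy Kxy) h
        rw [map_mul, map_add, map_add] at h2
        exact h2
      have r2 : yy * algebraMap Rxy Kxy (Q ((j : ℤ) + 2) 0) =
          algebraMap Rxy Kxy (Q ((j : ℤ) + 2) 1) + algebraMap Rxy Kxy (Q ((j : ℤ) + 1) 0) := by
        have h := hyrec ((j : ℤ) + 2) 0 (by positivity) le_rfl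
        rw [show (0 : ℤ) + 1 = 1 by norm_num, show (j : ℤ) + 2 - 1 = (j : ℤ) + 1 by ring,
          show (j : ℤ) + 2 + 1 = (j : ℤ) + 3 by ring, show (0 : ℤ) - 1 = -1 by norm_num,
          hQneg ((j : ℤ) + 3) (-1) (Or.inr (by norm_num)), add_zero] at h
        have h2 := congrArg (algebraMap Rxy Kxy) h
        rw [map_mul, map_add] at h2
        exact h2
      rw [tv]
      field_simp [xx_ne, yy_ne]
      linear_combination (-(xx ^ (j + 1) * xx ^ (j + 2))) * r1 +
        (xx ^ (j + 1) * xx ^ (j + 2)) * r2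
    · obtain ⟨w, rfl⟩ : ∃ w, r = w + 1 := ⟨r - 1, by omega⟩
      have c1 : ((j + (w + 1) + 1 : ℕ) : ℤ) + 1 - (j : ℤ) = ((w + 3 : ℕ) : ℤ) := by
        push_cast; ring
      have c2 : ((j + (w + 1) + 1 : ℕ) : ℤ) - (j : ℤ) = ((w + 2 : ℕ) : ℤ) := by
        push_cast; ring
      have c3 : ((j + (w + 1) + 1 : ℕ) : ℤ) - (j : ℤ) - 1 = ((w + 1 : ℕ) : ℤ) := by
        push_cast; ring
      have c4 : ((j + (w + 1) + 1 : ℕ) : ℤ) - (j : ℤ) - 2 = ((w : ℕ) : ℤ) := by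
        push_cast; ring
      rw [c4, c3, c1, c2]
      apply evST_injective
      rw [eM1, eA, eS, eM0]
      rw [hPev (j : ℤ) ((w + 3 : ℕ) : ℤ) (Int.natCast_nonneg j) (Int.natCast_nonneg _),
        hPev ((j : ℤ) + 1) ((w + 2 : ℕ) : ℤ) (by positivity) (Int.natCast_nonneg _),
        hPev ((j : ℤ) + 2) ((w + 1 : ℕ) : ℤ) (by positivity) (Int.natCast_nonneg _),
        hPev ((j : ℤ) + 3) ((w : ℕ) : ℤ) (by positivity) (Int.natCast_nonneg _)]
      have zx1 : xx ^ ((j : ℤ) + 1) = xx ^ (j + 1) := by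
        rw [show ((j : ℤ) + 1) = ((j + 1 : ℕ) : ℤ) by push_cast; ring, zpow_natCast]
      have zx2 : xx ^ ((j : ℤ) + 2) = xx ^ (j + 2) := by
        rw [show ((j : ℤ) + 2) = ((j + 2 : ℕ) : ℤ) by push_cast; ring, zpow_natCast]
      have zx3 : xx ^ ((j : ℤ) + 3) = xx ^ (j + 3) := by
        rw [show ((j : ℤ) + 3) = ((j + 3 : ℕ) : ℤ) by push_cast; ring, zpow_natCast]
      rw [zx1, zx2, zx3]
      simp only [zpow_natCast]
      have r1 : xx * algebraMap Rxy Kxy (Q ((j : ℤ) + 1) ((w + 2 : ℕ) : ℤ)) =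
          algebraMap Rxy Kxy (Q ((j : ℤ) + 2) ((w + 2 : ℕ) : ℤ)) +
            algebraMap Rxy Kxy (Q ((j : ℤ) + 1) ((w + 1 : ℕ) : ℤ)) +
              algebraMap Rxy Kxy (Q (j : ℤ) ((w + 3 : ℕ) : ℤ)) := by
        have h := hxrec ((j : ℤ) + 1) ((w + 2 : ℕ) : ℤ) (by positivity) (Int.natCast_nonneg _)
        rw [show (j : ℤ) + 1 + 1 = (j : ℤ) + 2 by ring,
          show ((w + 2 : ℕ) : ℤ) - 1 = ((w + 1 : ℕ) : ℤ) by push_cast; ring,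
          show (j : ℤ) + 1 - 1 = (j : ℤ) by ring,
          show ((w + 2 : ℕ) : ℤ) + 1 = ((w + 3 : ℕ) : ℤ) by push_cast; ring] at h
        have h2 := congrArg (algebraMap Rxy Kxy) h
        rw [map_mul, map_add, map_add] at h2
        exact h2
      have r2 : yy * algebraMap Rxy Kxy (Q ((j : ℤ) + 2) ((w + 1 : ℕ) : ℤ)) =
          algebraMap Rxy Kxy (Q ((j : ℤ) + 2) ((w + 2 : ℕ) : ℤ)) +
            algebraMap Rxy Kxy (Q ((j : ℤ) + 1) ((w + 1 : ℕ) : ℤ)) +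
              algebraMap Rxy Kxy (Q ((j : ℤ) + 3) ((w : ℕ) : ℤ)) := by
        have h := hyrec ((j : ℤ) + 2) ((w + 1 : ℕ) : ℤ) (by positivity) (Int.natCast_nonneg _)
        rw [show ((w + 1 : ℕ) : ℤ) + 1 = ((w + 2 : ℕ) : ℤ) by push_cast; ring,
          show (j : ℤ) + 2 - 1 = (j : ℤ) + 1 by ring,
          show (j : ℤ) + 2 + 1 = (j : ℤ) + 3 by ring,
          show ((w + 1 : ℕ) : ℤ) - 1 = ((w : ℕ) : ℤ) by push_cast; ring] at h
        have h2 := congrArg (algebraMap Rxy Kxy) h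
        rw [map_mul, map_add, map_add] at h2
        exact h2
      rw [tv, sv]
      field_simp [xx_ne, yy_ne]
      push_cast at r1 r2 ⊢
      linear_combination (-(xx ^ (3 * j + 6) * yy ^ (3 * w + 6))) * r1 +
        (xx ^ (3 * j + 6) * yy ^ (3 * w + 6)) * r2
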